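/- ψ_c is the largest solution of the differential inequality: if ψ:[0,1]→ℝ is twice differentiable with ψ(0)=ψ'(0)=0 and ψ''(1-θ) ≤ 1/(θ²+cθ) for all 0<θ<1, then ψ(t) ≤ ψ_c(t) for all t ∈ [0,1]. -/

import Mathlib

open Set

/-- Talagrand's function `ψ_c`. -/
noncomputable def psiC (c : ℝ) (θ : ℝ) : ℝ :=
  c⁻¹ * ((1 - θ) * Real.log (1 - θ) - (1 - θ + c) * Real.log ((1 - θ + c) / (1 + c)))

noncomputable def phiD (c : ℝ) (t : ℝ) : ℝ :=
  c⁻¹ * (Real.log (1 - t + c) - Real.log (1 + c) - Real.log (1 - t))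

lemma hasDerivAt_psiC (c : ℝ) (hc : 0 < c) {t : ℝ} (ht : t < 1) :
    HasDerivAt (psiC c) (phiD c t) t := by
  have h1 : (0:ℝ) < 1 - t := by linarith
  have h2 : (0:ℝ) < 1 - t + c := by linarith
  have hA : HasDerivAt (fun θ : ℝ => 1 - θ) (-1) t := by
    simpa using (hasDerivAt_id t).const_sub 1
  have hB : HasDerivAt (fun θ : ℝ => 1 - θ + c) (-1) t := hA.add_const c
  have hlog1 : HasDerivAt (fun θ : ℝ => Real.log (1 - θ)) (-1 / (1 - t)) t :=
    hA.log h1.ne'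
  have hlog2 : HasDerivAt (fun θ : ℝ => Real.log (1 - θ + c)) (-1 / (1 - t + c)) t :=
    hB.log h2.ne'
  have hf1 : HasDerivAt (fun θ : ℝ => (1 - θ) * Real.log (1 - θ))
      ((-1) * Real.log (1 - t) + (1 - t) * (-1 / (1 - t))) t := hA.mul hlog1
  have hf2 : HasDerivAt (fun θ : ℝ => (1 - θ + c) * (Real.log (1 - θ + c) - Real.log (1 + c)))
      ((-1) * (Real.log (1 - t + c) - Real.log (1 + c)) + (1 - t + c) * (-1 / (1 - t + c))) t :=
    hB.mul (hlog2.sub_const _)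
  have hfull := ((hf1.sub hf2).const_mul c⁻¹)
  have heq : psiC c =ᶠ[nhds t] fun θ =>
      c⁻¹ * ((1 - θ) * Real.log (1 - θ) -
        (1 - θ + c) * (Real.log (1 - θ + c) - Real.log (1 + c))) := by
    have hmem : t ∈ Iio (1 + c) := by simp; linarith
    filter_upwards [isOpen_Iio.mem_nhds hmem] with θ hθ
    have hθ2 : (0:ℝ) < 1 - θ + c := by simp at hθ; linarith
    have hc1 : (0:ℝ) < 1 + c := by linarith
    rw [psiC, Real.log_div hθ2.ne' hc1.ne']
  refine (hfull.congr_of_eventuallyEq (heq : psiC c =ᶠ[nhds t] _)).congr_deriv ?_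
  rw [phiD]
  field_simp
  ring

lemma hasDerivAt_phiD (c : ℝ) (hc : 0 < c) {t : ℝ} (ht : t < 1) :
    HasDerivAt (phiD c) (1 / ((1 - t) * (1 - t + c))) t := by
  have h1 : (0:ℝ) < 1 - t := by linarith
  have h2 : (0:ℝ) < 1 - t + c := by linarith
  have hA : HasDerivAt (fun θ : ℝ => 1 - θ) (-1) t := by
    simpa using (hasDerivAt_id t).const_sub 1
  have hB : HasDerivAt (fun θ : ℝ => 1 - θ + c) (-1) t := hA.add_const c
  have hlog1 : HasDerivAt (fun θ : ℝ => Real.log (1 - θ)) (-1 / (1 - t)) t :=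
    hA.log h1.ne'
  have hlog2 : HasDerivAt (fun θ : ℝ => Real.log (1 - θ + c)) (-1 / (1 - t + c)) t :=
    hB.log h2.ne'
  have h := (((hlog2.sub_const (Real.log (1 + c))).sub hlog1).const_mul c⁻¹)
  refine h.congr_deriv ?_
  field_simp
  ring

/-- `ψ_c` is the largest solution of the differential inequality: if `ψ : [0,1] → ℝ` is twice
continuously differentiable with `ψ(0) = ψ'(0) = 0` and `ψ''(1-θ) ≤ 1/(θ² + cθ)` for all
`0 < θ < 1`, then `ψ(t) ≤ ψ_c(t)` for all `t ∈ [0,1]`. -/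
theorem stmt10 (c : ℝ) (hc : 0 < c) (ψ ψ' ψ'' : ℝ → ℝ)
    (hd1 : ∀ t ∈ Icc (0:ℝ) 1, HasDerivAt ψ (ψ' t) t)
    (hd2 : ∀ t ∈ Icc (0:ℝ) 1, HasDerivAt ψ' (ψ'' t) t)
    (hcont : ContinuousOn ψ'' (Icc 0 1))
    (h0 : ψ 0 = 0) (h0' : ψ' 0 = 0)
    (hineq : ∀ θ ∈ Ioo (0:ℝ) 1, ψ'' (1 - θ) ≤ 1 / (θ ^ 2 + c * θ)) :
    ∀ t ∈ Icc (0:ℝ) 1, ψ t ≤ psiC c t := by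
  have hc1 : (0:ℝ) < 1 + c := by linarith
  -- Step A: g := phiD c - ψ' is nonneg on Ico 0 1
  set g : ℝ → ℝ := fun t => phiD c t - ψ' t with hg
  have hgd : ∀ t ∈ Ioo (0:ℝ) 1, HasDerivAt g (1 / ((1 - t) * (1 - t + c)) - ψ'' t) t := by
    intro t ht
    exact (hasDerivAt_phiD c hc ht.2).sub (hd2 t (Ioo_subset_Icc_self ht))
  have hgc : ContinuousOn g (Ico 0 1) := by
    intro t ht
    exact ((hasDerivAt_phiD c hc ht.2).sub
      (hd2 t (Ico_subset_Icc_self ht))).continuousAt.continuousWithinAt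
  have hgmono : MonotoneOn g (Ico 0 1) := by
    apply monotoneOn_of_deriv_nonneg (convex_Ico 0 1) hgc
    · intro t ht
      rw [interior_Ico] at ht
      exact ((hgd t ht).differentiableAt).differentiableWithinAt
    · intro t ht
      rw [interior_Ico] at ht
      rw [(hgd t ht).deriv]
      have hθ : (1 - t) ∈ Ioo (0:ℝ) 1 := by constructor <;> [linarith [ht.2]; linarith [ht.1]]
      have := hineq (1 - t) hθ
      have heq : (1 - t) ^ 2 + c * (1 - t) = (1 - t) * (1 - t + c) := by ring
      have h1t : (1:ℝ) - (1 - t) = t := by ring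
      rw [h1t, heq] at this
      linarith
  have hg0 : g 0 = 0 := by
    simp [hg, phiD, h0', Real.log_one]
  have hgnonneg : ∀ t ∈ Ico (0:ℝ) 1, 0 ≤ g t := by
    intro t ht
    have := hgmono (left_mem_Ico.2 one_pos) ht ht.1
    rwa [hg0] at this
  -- Step B: h := psiC c - ψ is monotone on Icc 0 1
  set h : ℝ → ℝ := fun t => psiC c t - ψ t with hh
  have hpsiCcont : ContinuousOn (psiC c) (Icc 0 1) := by
    apply ContinuousOn.mul continuousOn_const
    apply ContinuousOn.sub
    · exact (Real.continuous_mul_log.comp (continuous_const.sub continuous_id)).continuousOn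
    · apply ContinuousOn.mul ((continuousOn_const.sub continuousOn_id).add continuousOn_const)
      apply ContinuousOn.log (by fun_prop)
      intro t ht
      have hpos : (0:ℝ) < (1 - t + c) / (1 + c) := by
        apply div_pos _ hc1; linarith [ht.2]
      exact hpos.ne'
  have hhc : ContinuousOn h (Icc 0 1) := by
    apply hpsiCcont.sub
    intro t ht
    exact (hd1 t ht).continuousAt.continuousWithinAt
  have hhmono : MonotoneOn h (Icc 0 1) := by
    apply monotoneOn_of_deriv_nonneg (convex_Icc 0 1) hhc
    · intro t ht
      rw [interior_Icc] at ht
      exact ((hasDerivAt_psiC c hc ht.2).sub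
        (hd1 t (Ioo_subset_Icc_self ht))).differentiableAt.differentiableWithinAt
    · intro t ht
      rw [interior_Icc] at ht
      rw [show deriv h t = phiD c t - ψ' t from ((hasDerivAt_psiC c hc ht.2).sub (hd1 t (Ioo_subset_Icc_self ht))).deriv]
      exact hgnonneg t (Ioo_subset_Ico_self ht)
  have hpsiC0 : psiC c 0 = 0 := by
    simp [psiC, div_self hc1.ne']
  intro t ht
  have := hhmono (left_mem_Icc.2 zero_le_one) ht ht.1
  simp only [hh, hpsiC0, h0, sub_zero] at this
  linarith [this]
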